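/- (Theorem 2(ii).) Let H₀ be a real inner product space, φ₀ : Ω → H₀ a feature map with kernel κ₀(a,b) = ⟪φ₀(a), φ₀(b)⟫, and let κ₁ : ℝ^d × ℝ^d → ℝ be a symmetric kernel that is transparent with constant C ≥ 0, with feature map φ₁ : ℝ^d → H₁ into a real inner product space H₁. Then for every U, V ∈ H₀^d and every a ∈ Ω, ‖φ₁(U(a)) − φ₁(V(a))‖_{H₁} ≤ √C · √(κ₀(a,a)) · ‖U − V‖_{H₀^d}, where U(a) = (⟪u₁, φ₀(a)⟫, …, ⟪u_d, φ₀(a)⟫) and ‖U − V‖²_{H₀^d} = Σ_k ‖u_k − v_k‖². -/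

import Mathlib

open RealInnerProductSpace

lemma fderiv_fderiv_norm_le {E : Type*} [NormedAddCommGroup E] [NormedSpace ℝ E]
    (g : E → ℝ) (x : E) :
    ‖fderiv ℝ (fderiv ℝ g) x‖ ≤ ‖iteratedFDeriv ℝ 2 g x‖ := by
  have key : ∀ v w : E, ‖fderiv ℝ (fderiv ℝ g) x v w‖
      ≤ ‖iteratedFDeriv ℝ 2 g x‖ * ‖v‖ * ‖w‖ := by
    intro v w
    have h := iteratedFDeriv_two_apply (𝕜 := ℝ) g x ![v, w]
    simp only [Matrix.cons_val_zero, Matrix.cons_val_one, Matrix.head_cons] at h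
    rw [← h]
    calc ‖iteratedFDeriv ℝ 2 g x ![v, w]‖
        ≤ ‖iteratedFDeriv ℝ 2 g x‖ * ∏ i, ‖![v, w] i‖ :=
          (iteratedFDeriv ℝ 2 g x).le_opNorm _
      _ = ‖iteratedFDeriv ℝ 2 g x‖ * ‖v‖ * ‖w‖ := by
          rw [Fin.prod_univ_two]; simp [mul_assoc]
  exact ContinuousLinearMap.opNorm_le_bound₂ _ (norm_nonneg _) key

-- Lipschitz bound on the first derivative
lemma fderiv_lip {E : Type*} [NormedAddCommGroup E] [InnerProductSpace ℝ E]
    (g : E → ℝ) (C : ℝ) (hs : ContDiff ℝ 2 g)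
    (hb : ∀ x, ‖iteratedFDeriv ℝ 2 g x‖ ≤ C) (x y : E) :
    ‖fderiv ℝ g y - fderiv ℝ g x‖ ≤ C * ‖y - x‖ := by
  have hdiff : ∀ z ∈ (Set.univ : Set E), DifferentiableAt ℝ (fderiv ℝ g) z := by
    intro z _
    exact ((hs.fderiv_right (m := 1) (by norm_num)).differentiable one_ne_zero).differentiableAt
  exact (convex_univ).norm_image_sub_le_of_norm_fderiv_le hdiff
    (fun z _ => le_trans (fderiv_fderiv_norm_le g z) (hb z)) trivial trivial

lemma transparent_sq_bound {E : Type*} [NormedAddCommGroup E] [InnerProductSpace ℝ E]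
    (κ₁ : E → E → ℝ) (C : ℝ)
    (hsmooth : ∀ t, ContDiff ℝ 2 (fun s => κ₁ s t))
    (hderiv : ∀ t, fderiv ℝ (fun s => κ₁ s t) t = 0)
    (hbound : ∀ s t, ‖iteratedFDeriv ℝ 2 (fun s' => κ₁ s' t) s‖ ≤ C)
    (s t : E) :
    κ₁ s s - κ₁ s t - κ₁ t s + κ₁ t t ≤ C * ‖s - t‖ ^ 2 := by
  have hCnn : 0 ≤ C := le_trans (norm_nonneg _) (hbound t t)
  have hdiffs : Differentiable ℝ (fun x => κ₁ x s) :=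
    (hsmooth s).differentiable (by norm_num)
  have hdifft : Differentiable ℝ (fun x => κ₁ x t) :=
    (hsmooth t).differentiable (by norm_num)
  set F : E → ℝ := fun x => κ₁ x s - κ₁ x t with hF
  have hFderiv : ∀ x : ℝ, HasDerivAt (fun r : ℝ => F (t + r • (s - t)))
      ((fderiv ℝ (fun y => κ₁ y s) (t + x • (s - t)) -
        fderiv ℝ (fun y => κ₁ y t) (t + x • (s - t))) (s - t)) x := by
    intro x
    have hline : HasDerivAt (fun r : ℝ => t + r • (s - t)) (s - t) x := by
      simpa using ((hasDerivAt_id x).smul_const (s - t)).const_add t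
    have hFd : HasFDerivAt F
        (fderiv ℝ (fun y => κ₁ y s) (t + x • (s - t)) -
         fderiv ℝ (fun y => κ₁ y t) (t + x • (s - t))) (t + x • (s - t)) :=
      ((hdiffs _).hasFDerivAt).sub ((hdifft _).hasFDerivAt)
    exact hFd.comp_hasDerivAt x hline
  obtain ⟨c, hc01, hc⟩ := exists_hasDerivAt_eq_slope (fun r : ℝ => F (t + r • (s - t)))
    (fun x => (fderiv ℝ (fun y => κ₁ y s) (t + x • (s - t)) -
        fderiv ℝ (fun y => κ₁ y t) (t + x • (s - t))) (s - t))
    one_pos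
    (by
      have : Continuous (fun r : ℝ => F (t + r • (s - t))) := by
        exact (hdiffs.continuous.sub hdifft.continuous).comp
          (continuous_const.add (continuous_id.smul continuous_const))
      exact this.continuousOn)
    (fun x _ => hFderiv x)
  set ξ := t + c • (s - t) with hξ
  have hψ1 : F (t + (1 : ℝ) • (s - t)) = F s := by simp
  have hψ0 : F (t + (0 : ℝ) • (s - t)) = F t := by simp
  rw [hψ1, hψ0, sub_zero, div_one] at hc
  -- bounds on the two fderivs at ξ
  have hbs : ‖fderiv ℝ (fun y => κ₁ y s) ξ‖ ≤ C * ((1 - c) * ‖s - t‖) := by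
    have h0 := hderiv s
    have := fderiv_lip (fun y => κ₁ y s) C (hsmooth s) (fun x => hbound x s) s ξ
    rw [h0, sub_zero] at this
    have hxs : ξ - s = (c - 1) • (s - t) := by
      rw [hξ]; module
    calc ‖fderiv ℝ (fun y => κ₁ y s) ξ‖ ≤ C * ‖ξ - s‖ := this
      _ = C * ((1 - c) * ‖s - t‖) := by
          rw [hxs, norm_smul, Real.norm_eq_abs,
            abs_of_nonpos (by linarith [hc01.2])]
          ring_nf
  have hbt : ‖fderiv ℝ (fun y => κ₁ y t) ξ‖ ≤ C * (c * ‖s - t‖) := by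
    have h0 := hderiv t
    have := fderiv_lip (fun y => κ₁ y t) C (hsmooth t) (fun x => hbound x t) t ξ
    rw [h0, sub_zero] at this
    have hxt : ξ - t = c • (s - t) := by rw [hξ]; abel
    calc ‖fderiv ℝ (fun y => κ₁ y t) ξ‖ ≤ C * ‖ξ - t‖ := this
      _ = C * (c * ‖s - t‖) := by
          rw [hxt, norm_smul, Real.norm_eq_abs, abs_of_pos hc01.1]
  have hval : κ₁ s s - κ₁ s t - κ₁ t s + κ₁ t t
      = (fderiv ℝ (fun y => κ₁ y s) ξ - fderiv ℝ (fun y => κ₁ y t) ξ) (s - t) := by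
    rw [hc]; simp only [hF]; ring
  rw [hval]
  calc (fderiv ℝ (fun y => κ₁ y s) ξ - fderiv ℝ (fun y => κ₁ y t) ξ) (s - t)
      ≤ ‖(fderiv ℝ (fun y => κ₁ y s) ξ - fderiv ℝ (fun y => κ₁ y t) ξ) (s - t)‖ :=
        le_abs_self _
    _ ≤ ‖fderiv ℝ (fun y => κ₁ y s) ξ - fderiv ℝ (fun y => κ₁ y t) ξ‖ * ‖s - t‖ :=
        ContinuousLinearMap.le_opNorm _ _
    _ ≤ (C * ((1 - c) * ‖s - t‖) + C * (c * ‖s - t‖)) * ‖s - t‖ := by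
        gcongr
        exact le_trans (norm_sub_le _ _) (add_le_add hbs hbt)
    _ = C * ‖s - t‖ ^ 2 := by ring


/-- Theorem 2(ii) of the paper: composing evaluation with the feature map of a
transparent kernel is Lipschitz with constant `√C · √κ₀(a,a)`. -/
theorem transparent_kernel_evaluation_bound
    {Ω : Type*} {H₀ : Type*} [NormedAddCommGroup H₀] [InnerProductSpace ℝ H₀]
    (φ₀ : Ω → H₀) (κ₀ : Ω → Ω → ℝ)
    (hκ₀ : ∀ a b, κ₀ a b = ⟪φ₀ a, φ₀ b⟫)
    {d : ℕ} (hd : 1 ≤ d)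
    (κ₁ : EuclideanSpace ℝ (Fin d) → EuclideanSpace ℝ (Fin d) → ℝ)
    (hsymm : ∀ s t, κ₁ s t = κ₁ t s)
    (C : ℝ) (hC : 0 ≤ C)
    (hsmooth : ∀ t, ContDiff ℝ 2 (fun s => κ₁ s t))
    (hderiv : ∀ t, fderiv ℝ (fun s => κ₁ s t) t = 0)
    (hbound : ∀ s t, ‖iteratedFDeriv ℝ 2 (fun s' => κ₁ s' t) s‖ ≤ C)
    {H₁ : Type*} [NormedAddCommGroup H₁] [InnerProductSpace ℝ H₁]
    (φ₁ : EuclideanSpace ℝ (Fin d) → H₁)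
    (hφ₁ : ∀ s t, ⟪φ₁ s, φ₁ t⟫ = κ₁ s t)
    (U V : Fin d → H₀) (a : Ω) :
    ‖φ₁ ((WithLp.equiv 2 (Fin d → ℝ)).symm (fun k => ⟪U k, φ₀ a⟫))
        - φ₁ ((WithLp.equiv 2 (Fin d → ℝ)).symm (fun k => ⟪V k, φ₀ a⟫))‖
      ≤ Real.sqrt C * Real.sqrt (κ₀ a a) * Real.sqrt (∑ k, ‖U k - V k‖ ^ 2) := by
  set s : EuclideanSpace ℝ (Fin d) := (WithLp.equiv 2 (Fin d → ℝ)).symm (fun k => ⟪U k, φ₀ a⟫)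
  set t : EuclideanSpace ℝ (Fin d) := (WithLp.equiv 2 (Fin d → ℝ)).symm (fun k => ⟪V k, φ₀ a⟫)
  have hκaa : κ₀ a a = ‖φ₀ a‖ ^ 2 := by rw [hκ₀, real_inner_self_eq_norm_sq]
  have hκaann : 0 ≤ κ₀ a a := by rw [hκaa]; positivity
  have hSnn : 0 ≤ ∑ k, ‖U k - V k‖ ^ 2 := Finset.sum_nonneg fun k _ => by positivity
  -- norm squared of the feature difference
  have h1 : ‖φ₁ s - φ₁ t‖ ^ 2 = κ₁ s s - κ₁ s t - κ₁ t s + κ₁ t t := by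
    rw [norm_sub_sq_real, ← real_inner_self_eq_norm_sq, ← real_inner_self_eq_norm_sq,
      hφ₁, hφ₁, hφ₁]
    rw [hsymm s t]; ring
  -- norm of s - t
  have h2 : ‖s - t‖ ^ 2 ≤ κ₀ a a * ∑ k, ‖U k - V k‖ ^ 2 := by
    have he : ‖s - t‖ ^ 2 = ∑ k, ‖(s - t) k‖ ^ 2 := by
      rw [EuclideanSpace.norm_eq, Real.sq_sqrt (Finset.sum_nonneg fun k _ => by positivity)]
    rw [he]
    have hcomp : ∀ k, (s - t) k = ⟪U k - V k, φ₀ a⟫ := by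
      intro k
      simp [s, t, inner_sub_left]
    calc ∑ k, ‖(s - t) k‖ ^ 2 = ∑ k, ⟪U k - V k, φ₀ a⟫ ^ 2 := by
          refine Finset.sum_congr rfl fun k _ => ?_
          rw [hcomp k, Real.norm_eq_abs, sq_abs]
      _ ≤ ∑ k, ‖U k - V k‖ ^ 2 * ‖φ₀ a‖ ^ 2 := by
          refine Finset.sum_le_sum fun k _ => ?_
          have h := abs_real_inner_le_norm (U k - V k) (φ₀ a)
          calc ⟪U k - V k, φ₀ a⟫ ^ 2 = |⟪U k - V k, φ₀ a⟫| ^ 2 := (sq_abs _).symm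
            _ ≤ (‖U k - V k‖ * ‖φ₀ a‖) ^ 2 := by
                exact pow_le_pow_left₀ (abs_nonneg _) h 2
            _ = ‖U k - V k‖ ^ 2 * ‖φ₀ a‖ ^ 2 := by ring
      _ = κ₀ a a * ∑ k, ‖U k - V k‖ ^ 2 := by
          rw [hκaa, ← Finset.sum_mul]; ring
  have hmain : ‖φ₁ s - φ₁ t‖ ^ 2 ≤ C * (κ₀ a a * ∑ k, ‖U k - V k‖ ^ 2) := by
    rw [h1]
    calc κ₁ s s - κ₁ s t - κ₁ t s + κ₁ t t ≤ C * ‖s - t‖ ^ 2 :=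
          transparent_sq_bound κ₁ C hsmooth hderiv hbound s t
      _ ≤ C * (κ₀ a a * ∑ k, ‖U k - V k‖ ^ 2) := by gcongr
  calc ‖φ₁ s - φ₁ t‖ = Real.sqrt (‖φ₁ s - φ₁ t‖ ^ 2) := (Real.sqrt_sq (norm_nonneg _)).symm
    _ ≤ Real.sqrt (C * (κ₀ a a * ∑ k, ‖U k - V k‖ ^ 2)) := Real.sqrt_le_sqrt hmain
    _ = Real.sqrt C * Real.sqrt (κ₀ a a) * Real.sqrt (∑ k, ‖U k - V k‖ ^ 2) := by
        rw [Real.sqrt_mul hC, Real.sqrt_mul hκaann, mul_assoc]
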